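/- For every natural number m ≥ 2 and θ with sin(θ/2) = 1/2^{m-1}, one has (1+cos θ)^{m-1} + (1+sin θ)^{m-1} ≥ 2^{m-1} + 1 + (m-1)/2^m. -/

import Mathlib

open Real

theorem stmt_13 (m : ℕ) (hm : 2 ≤ m) (θ : ℝ) (hθ : θ ∈ Set.Ioo 0 π)
    (hs : sin (θ / 2) = 1 / 2 ^ (m - 1)) :
    (2 : ℝ) ^ (m - 1) + 1 + ((m : ℝ) - 1) / 2 ^ m ≤
      (1 + cos θ) ^ (m - 1) + (1 + sin θ) ^ (m - 1) := by
  obtain ⟨hθ0, hθπ⟩ := hθ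
  set n := m - 1 with hn
  have hn1 : 1 ≤ n := by omega
  have hmn : m = n + 1 := by omega
  have hcast : (m : ℝ) - 1 = (n : ℝ) := by rw [hmn]; push_cast; ring
  have hpi := Real.pi_pos
  have h2n : (0:ℝ) < 2 ^ n := by positivity
  have h2n2 : (2:ℝ) ≤ 2 ^ n := by
    calc (2:ℝ) = 2 ^ 1 := by norm_num
    _ ≤ 2 ^ n := by exact pow_le_pow_right₀ (by norm_num) hn1
  set s : ℝ := 1 / 2 ^ n with hsdef
  have hs' : sin (θ / 2) = s := hs
  have hs_pos : 0 < s := by positivity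
  have hs_le : s ≤ 1 / 2 := by
    rw [hsdef]
    rw [div_le_div_iff₀ h2n (by norm_num)]
    linarith
  have hcos2 : 0 < cos (θ / 2) :=
    Real.cos_pos_of_mem_Ioo ⟨by linarith, by linarith⟩
  have hpy := Real.sin_sq_add_cos_sq (θ / 2)
  have hcos34 : 3 / 4 ≤ cos (θ / 2) := by nlinarith
  have hsinθ : sin θ = 2 * sin (θ / 2) * cos (θ / 2) := by
    rw [← Real.sin_two_mul]; ring_nf
  have hcosθ : 1 + cos θ = 2 * (1 - s ^ 2) := by
    have h2 : θ = 2 * (θ / 2) := by ring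
    rw [h2, Real.cos_two_mul]
    nlinarith
  have hsinθ_ge : 3 / 2 * s ≤ sin θ := by
    rw [hsinθ, hs']
    nlinarith
  have hsinθ_le : sin θ ≤ 1 := Real.sin_le_one θ
  -- Bernoulli inequalities
  have b1 : 1 + (n : ℝ) * (-(s ^ 2)) ≤ (1 + -(s ^ 2)) ^ n := by
    apply one_add_mul_le_pow
    nlinarith
  have b2 : 1 + (n : ℝ) * sin θ ≤ (1 + sin θ) ^ n := by
    apply one_add_mul_le_pow
    nlinarith
  have key1 : (2:ℝ) ^ n * (1 - (n : ℝ) * s ^ 2) ≤ (1 + cos θ) ^ n := by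
    rw [hcosθ, mul_pow]
    have : (1 - (n:ℝ) * s ^ 2) ≤ (1 - s ^ 2) ^ n := by
      simpa [sub_eq_add_neg, mul_comm] using b1
    exact mul_le_mul_of_nonneg_left this h2n.le
  have hns : (2:ℝ) ^ n * s ^ 2 = s := by
    rw [hsdef]
    field_simp
  have hm2 : ((m : ℝ) - 1) / 2 ^ m = (n : ℝ) * s / 2 := by
    rw [hcast, hmn, pow_succ, hsdef]
    field_simp
  have hnpos : (0:ℝ) ≤ (n : ℝ) := Nat.cast_nonneg n
  calc (2 : ℝ) ^ n + 1 + ((m : ℝ) - 1) / 2 ^ m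
      = 2 ^ n * (1 - (n:ℝ) * s ^ 2) + (n:ℝ) * (2 ^ n * s ^ 2)
        + (1 + (n:ℝ) * s / 2) := by rw [hm2]; ring
    _ = 2 ^ n * (1 - (n:ℝ) * s ^ 2) + (1 + (n:ℝ) * (3 / 2 * s)) := by
        rw [hns]; ring
    _ ≤ (1 + cos θ) ^ n + (1 + (n:ℝ) * sin θ) := by
        have : (n:ℝ) * (3/2*s) ≤ (n:ℝ) * sin θ :=
          mul_le_mul_of_nonneg_left hsinθ_ge hnpos
        linarith
    _ ≤ (1 + cos θ) ^ n + (1 + sin θ) ^ n := by linarith
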